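/- arXiv:1808.02156 — 5 statements merged into one kernel-verified Lean document; each statement's English description precedes it below -/
import Mathlib

section
/- Let B be a skew-symmetrizable n×n integer matrix with positive diagonal skew-symmetrizer D, and let t be reached from t_0 by the path (i_1,…,i_m) with intermediate vertices t_0, t_1, …, t_m = t. Then the principal extension satisfies the 2n×2n block identity B̄_t = [[B_t, −D^{−1}(C^{B;t_0}_t)^T D], [C^{B;t_0}_t, S]], where S = Σ_{s=0}^{m−1} ( C^{B;t_0}_{t_s} [−D^{−1}(C^{B;t_0}_{t_s})^T D]^{i_{s+1}•}_+ − [−C^{B;t_0}_{t_s}]^{•i_{s+1}}_+ D^{−1}(C^{B;t_0}_{t_s})^T D ). -/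
open Matrix

section Defs

variable {ι : Type} [Fintype ι] [DecidableEq ι]
variable {R : Type} [CommRing R] [LinearOrder R] [IsStrictOrderedRing R]

/-- Entrywise positive part `[A]₊`. -/
def matPos (A : Matrix ι ι R) : Matrix ι ι R := fun i j => max (A i j) 0

/-- `A^{k•}`: the matrix keeping only the `k`-th row of `A`. -/
def rowSel (k : ι) (A : Matrix ι ι R) : Matrix ι ι R := fun i j => if i = k then A i j else 0

/-- `A^{•k}`: the matrix keeping only the `k`-th column of `A`. -/
def colSel (k : ι) (A : Matrix ι ι R) : Matrix ι ι R := fun i j => if j = k then A i j else 0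

/-- Entrywise maximum of two matrices. -/
def emax (A B : Matrix ι ι R) : Matrix ι ι R := fun i j => max (A i j) (B i j)

/-- `J_ℓ`: identity matrix with `(ℓ,ℓ)` entry replaced by `-1`. -/
def Jmat (ℓ : ι) : Matrix ι ι R := Matrix.diagonal fun i => if i = ℓ then -1 else 1

/-- Matrix mutation `μ_k(B)` in direction `k`. -/
def mutate (B : Matrix ι ι R) (k : ι) : Matrix ι ι R := fun i j =>
  if i = k ∨ j = k then -(B i j)
  else B i j + max (B i k) 0 * B k j + B i k * max (-(B k j)) 0

/-- The data `(B_t, C_t, G_t, F_t)` attached to a vertex. -/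
structure SeedData (ι R : Type) where
  B : Matrix ι ι R
  C : Matrix ι ι R
  G : Matrix ι ι R
  F : Matrix ι ι R

/-- One final-seed mutation step in direction `ℓ` (with initial exchange matrix `B0`). -/
def seedStep (B0 : Matrix ι ι R) (s : SeedData ι R) (ℓ : ι) : SeedData ι R where
  B := mutate s.B ℓ
  C := s.C * (Jmat ℓ + rowSel ℓ (matPos s.B)) + colSel ℓ (matPos (-s.C)) * s.B
  G := s.G * (Jmat ℓ + colSel ℓ (matPos s.B)) - B0 * colSel ℓ (matPos s.C)
  F := s.F * Jmat ℓ + emax (colSel ℓ (matPos s.C) + s.F * colSel ℓ (matPos s.B))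
      (colSel ℓ (matPos (-s.C)) + s.F * colSel ℓ (matPos (-s.B)))

/-- The seed data at the endpoint of the path `p` starting from the initial vertex. -/
def seedOf (B0 : Matrix ι ι R) (p : List ι) : SeedData ι R :=
  p.foldl (seedStep B0) ⟨B0, 1, 1, 0⟩

/-- The exchange matrix `B_t` at the end of the path `p`. -/
def Bpath (B : Matrix ι ι R) (p : List ι) : Matrix ι ι R := (seedOf B p).B

/-- The `C`-matrix `C^{B;t_0}_t` at the end of the path `p`. -/
def Cmat (B : Matrix ι ι R) (p : List ι) : Matrix ι ι R := (seedOf B p).C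

/-- The `G`-matrix `G^{B;t_0}_t` at the end of the path `p`. -/
def Gmat (B : Matrix ι ι R) (p : List ι) : Matrix ι ι R := (seedOf B p).G

/-- The `F`-matrix `F^{B;t_0}_t` at the end of the path `p`. -/
def Fmat (B : Matrix ι ι R) (p : List ι) : Matrix ι ι R := (seedOf B p).F

/-- `B` is skew-symmetrizable: `DB` is skew-symmetric for some positive diagonal `D`. -/
def IsSkewSymmetrizable (B : Matrix ι ι ℤ) : Prop :=
  ∃ d : ι → ℤ, (∀ i, 0 < d i) ∧ (Matrix.diagonal d * B)ᵀ = -(Matrix.diagonal d * B)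

/-- Column sign-coherence: every column is nonzero and has all entries of one sign. -/
def ColSignCoherent (A : Matrix ι ι ℤ) : Prop :=
  ∀ j, (∃ i, A i j ≠ 0) ∧ ((∀ i, 0 ≤ A i j) ∨ (∀ i, A i j ≤ 0))

/-- Row sign-coherence: every row is nonzero and has all entries of one sign. -/
def RowSignCoherent (A : Matrix ι ι ℤ) : Prop :=
  ∀ i, (∃ j, A i j ≠ 0) ∧ ((∀ j, 0 ≤ A i j) ∨ (∀ j, A i j ≤ 0))

/-- `ε` is the column sign `ε_{•ℓ}(A)` of the (sign-coherent, nonzero) `ℓ`-th column of `A`. -/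
def IsColSign (ε : ℤ) (A : Matrix ι ι ℤ) (ℓ : ι) : Prop :=
  (ε = 1 ∨ ε = -1) ∧ (∃ i, A i ℓ ≠ 0) ∧ ∀ i, 0 ≤ ε * A i ℓ

/-- `ε` is the row sign `ε_{k•}(A)` of the (sign-coherent, nonzero) `k`-th row of `A`. -/
def IsRowSign (ε : ℤ) (A : Matrix ι ι ℤ) (k : ι) : Prop :=
  (ε = 1 ∨ ε = -1) ∧ (∃ j, A k j ≠ 0) ∧ ∀ j, 0 ≤ ε * A k j

/-- Sign-coherence of `C`-matrices: for every skew-symmetrizable initial integer matrix and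
every path, the associated `C`-matrix is column sign-coherent. -/
def SignCoherenceOfC : Prop :=
  ∀ (κ : Type) [Fintype κ] [DecidableEq κ], ∀ B : Matrix κ κ ℤ,
    IsSkewSymmetrizable B → ∀ p : List κ, ColSignCoherent (Cmat B p)

/-- The principal extension `B̄ = [[B, -I],[I, O]]` of `B`, on the index type `Fin n ⊕ Fin n`. -/
def pext {n : ℕ} (B : Matrix (Fin n) (Fin n) ℤ) :
    Matrix (Fin n ⊕ Fin n) (Fin n ⊕ Fin n) ℤ :=
  Matrix.fromBlocks B (-1) 1 0

noncomputable section FPolys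

/-- The ambient field of rational functions `ℚ(y_i : i ∈ ι)` (fraction field of `ℤ[y_i]`). -/
abbrev FField (ι : Type) := FractionRing (MvPolynomial ι ℤ)

/-- The variable `y_i` inside the fraction field. -/
def yvar (i : ι) : FField ι := algebraMap (MvPolynomial ι ℤ) (FField ι) (MvPolynomial.X i)

/-- One mutation step for the triple `(B_t, C_t, (F_{j;t})_j)`. -/
def fpolyStep (s : Matrix ι ι ℤ × Matrix ι ι ℤ × (ι → FField ι)) (ℓ : ι) :
    Matrix ι ι ℤ × Matrix ι ι ℤ × (ι → FField ι) :=
  ⟨mutate s.1 ℓ,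
   s.2.1 * (Jmat ℓ + rowSel ℓ (matPos s.1)) + colSel ℓ (matPos (-s.2.1)) * s.1,
   fun j => if j = ℓ then
     (s.2.2 ℓ)⁻¹ *
       ((∏ i, yvar i ^ (max (s.2.1 i ℓ) 0).toNat) * (∏ i, s.2.2 i ^ (max (s.1 i ℓ) 0).toNat)
        + (∏ i, yvar i ^ (max (-(s.2.1 i ℓ)) 0).toNat) *
            (∏ i, s.2.2 i ^ (max (-(s.1 i ℓ)) 0).toNat))
   else s.2.2 j⟩

/-- The `F`-polynomial `F^{B;t_0}_{j;t}` (as an element of the field of rational functions)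
at the end of the path `p`. -/
def Fpoly (B : Matrix ι ι ℤ) (p : List ι) : ι → FField ι :=
  (p.foldl fpolyStep ⟨B, 1, fun _ => 1⟩).2.2

/-- The polynomial representing an element of the fraction field (when it is a polynomial). -/
def polyOf (x : FField ι) : MvPolynomial ι ℤ := by
  classical exact
    if h : ∃ q : MvPolynomial ι ℤ, algebraMap (MvPolynomial ι ℤ) (FField ι) q = x then
      h.choose else 0

/-- The `H`-matrix `H^{B;t_0}_t`: `h_{ij;t}` is the minimum over exponent vectors `a` in the
support of `F^{B;t_0}_{j;t}` of `-a_i + ∑_{l ≠ i} [-b_{il}]₊ a_l`. -/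
def Hmat (B : Matrix ι ι ℤ) (p : List ι) : Matrix ι ι ℤ := fun i j =>
  if h : (polyOf (Fpoly B p j)).support.Nonempty then
    (polyOf (Fpoly B p j)).support.inf' h
      (fun a => -(a i : ℤ) + ∑ l ∈ Finset.univ.erase i, max (-(B i l)) 0 * (a l : ℤ))
  else 0

end FPolys

/-- The embedding `ℚ(y_1,…,y_n) → ℚ(y_1,…,y_{2n})` sending `y_i` to `y_i`
(the second batch of variables indexed by the right summand). -/
noncomputable def embK (n : ℕ) : FField (Fin n) →+* FField (Fin n ⊕ Fin n) :=
  IsFractionRing.lift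
    (g := (algebraMap (MvPolynomial (Fin n ⊕ Fin n) ℤ) (FField (Fin n ⊕ Fin n))).comp
      (MvPolynomial.rename (Sum.inl : Fin n → Fin n ⊕ Fin n)).toRingHom)
    (by
      intro a b hab
      simp only [RingHom.coe_comp, Function.comp_apply, AlgHom.toRingHom_eq_coe,
        RingHom.coe_coe] at hab
      exact MvPolynomial.rename_injective _ Sum.inl_injective
        (IsFractionRing.injective (MvPolynomial (Fin n ⊕ Fin n) ℤ)
          (FField (Fin n ⊕ Fin n)) hab))

/-- `D⁻¹ Cᵀ D` over `ℚ`, for the positive diagonal skew-symmetrizer `D = diagonal d`. -/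
noncomputable def dCd {n : ℕ} (d : Fin n → ℤ) (C : Matrix (Fin n) (Fin n) ℤ) :
    Matrix (Fin n) (Fin n) ℚ :=
  (Matrix.diagonal fun i => (d i : ℚ))⁻¹ * (C.map (Int.cast : ℤ → ℚ))ᵀ *
    Matrix.diagonal fun i => (d i : ℚ)

end Defs


section AuxProof

variable {ι : Type} [Fintype ι] [DecidableEq ι]

set_option linter.unusedSectionVars false in
private lemma keyid (a b : ℚ) :
    a * max (-b) 0 - max (-a) 0 * b = a * max b 0 - max a 0 * b := by
  have hb : max (-b) 0 = max b 0 - b := by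
    rw [← max_sub_sub_right b 0 b, sub_self, zero_sub, max_comm]
  have ha : max (-a) 0 = max a 0 - a := by
    rw [← max_sub_sub_right a 0 a, sub_self, zero_sub, max_comm]
  rw [hb, ha]; ring

set_option linter.unusedSectionVars false in
private lemma map_matPos (A : Matrix ι ι ℤ) :
    (matPos A).map ((↑) : ℤ → ℚ) = matPos (A.map ((↑) : ℤ → ℚ)) := by
  ext i j; simp [matPos, Matrix.map_apply]

set_option linter.unusedSectionVars false in
private lemma map_rowSel (k : ι) (A : Matrix ι ι ℤ) :
    (rowSel k A).map ((↑) : ℤ → ℚ) = rowSel k (A.map ((↑) : ℤ → ℚ)) := by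
  ext i j; simp [rowSel, Matrix.map_apply, apply_ite ((↑) : ℤ → ℚ)]

set_option linter.unusedSectionVars false in
private lemma map_colSel (k : ι) (A : Matrix ι ι ℤ) :
    (colSel k A).map ((↑) : ℤ → ℚ) = colSel k (A.map ((↑) : ℤ → ℚ)) := by
  ext i j; simp [colSel, Matrix.map_apply, apply_ite ((↑) : ℤ → ℚ)]

set_option linter.unusedSectionVars false in
private lemma map_Jmat (k : ι) :
    (Jmat k : Matrix ι ι ℤ).map ((↑) : ℤ → ℚ) = Jmat k := by
  ext i j; simp [Jmat, Matrix.diagonal_apply, apply_ite ((↑) : ℤ → ℚ)]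

set_option linter.unusedSectionVars false in
private lemma map_negM (A : Matrix ι ι ℤ) :
    (-A).map ((↑) : ℤ → ℚ) = -(A.map ((↑) : ℤ → ℚ)) := by
  ext i j; simp

set_option linter.unusedSectionVars false in
private lemma map_mutate (A : Matrix ι ι ℤ) (k : ι) :
    (mutate A k).map ((↑) : ℤ → ℚ) = mutate (A.map ((↑) : ℤ → ℚ)) k := by
  ext i j
  simp only [mutate, Matrix.map_apply]
  split_ifs <;> push_cast <;> ring

private lemma mapQ_mul (A B : Matrix ι ι ℤ) :
    (A * B).map ((↑) : ℤ → ℚ) = A.map ((↑) : ℤ → ℚ) * B.map ((↑) : ℤ → ℚ) := by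
  ext i j; simp [Matrix.mul_apply, Matrix.map_apply]

set_option linter.unusedSectionVars false in
private lemma mapQ_add (A B : Matrix ι ι ℤ) :
    (A + B).map ((↑) : ℤ → ℚ) = A.map ((↑) : ℤ → ℚ) + B.map ((↑) : ℤ → ℚ) := by
  ext i j; simp

set_option linter.unusedSectionVars false in
private lemma mapQ_one :
    ((1 : Matrix ι ι ℤ)).map ((↑) : ℤ → ℚ) = 1 := by
  ext i j; simp [Matrix.one_apply, apply_ite ((↑) : ℤ → ℚ)]

private lemma mulJrow_apply (C A : Matrix ι ι ℚ) (ℓ i j : ι) :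
    (C * (Jmat ℓ + rowSel ℓ (matPos A)) : Matrix ι ι ℚ) i j
      = (if j = ℓ then -(C i j) else C i j) + C i ℓ * max (A ℓ j) 0 := by
  rw [Matrix.mul_apply]
  have h : ∀ k, C i k * ((Jmat ℓ + rowSel ℓ (matPos A) : Matrix ι ι ℚ) k j)
      = (if k = j then (if j = ℓ then -(C i k) else C i k) else 0)
        + (if k = ℓ then C i k * max (A ℓ j) 0 else 0) := by
    intro k
    by_cases hk : k = ℓ <;> by_cases hkj : k = j <;> subst_vars <;>
      simp [Jmat, rowSel, matPos, Matrix.diagonal_apply, Matrix.add_apply, *] <;>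
      ring_nf
  simp only [h, Finset.sum_add_distrib, Finset.sum_ite_eq', Finset.mem_univ, if_true]

private lemma colSel_mul_apply (M A : Matrix ι ι ℚ) (ℓ i j : ι) :
    (colSel ℓ M * A : Matrix ι ι ℚ) i j = M i ℓ * A ℓ j := by
  rw [Matrix.mul_apply]; simp [colSel, ite_mul, Finset.sum_ite_eq']

private lemma mul_rowSel_apply (C M : Matrix ι ι ℚ) (ℓ i j : ι) :
    (C * rowSel ℓ M : Matrix ι ι ℚ) i j = C i ℓ * M ℓ j := by
  rw [Matrix.mul_apply]; simp [rowSel, mul_ite, Finset.sum_ite_eq']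

set_option linter.unusedSectionVars false in
private lemma skew_mutate (dq : ι → ℚ) (hdq : ∀ i, 0 < dq i) (A : Matrix ι ι ℚ)
    (h : ∀ i j, dq i * A i j = -(dq j * A j i)) (ℓ : ι) :
    ∀ i j, dq i * mutate A ℓ i j = -(dq j * mutate A ℓ j i) := by
  intro i j
  by_cases hc : i = ℓ ∨ j = ℓ
  · have hc' : j = ℓ ∨ i = ℓ := hc.symm
    simp only [mutate, if_pos hc, if_pos hc']
    linarith [h i j]
  · push_neg at hc
    have hc' : ¬(j = ℓ ∨ i = ℓ) := by tauto
    simp only [mutate, if_neg (by tauto : ¬(i = ℓ ∨ j = ℓ)), if_neg hc']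
    have h3 := h i j
    have h1 : dq i * A i ℓ = -(dq ℓ * A ℓ i) := h i ℓ
    have h2 : dq j * A j ℓ = -(dq ℓ * A ℓ j) := h j ℓ
    have p1 : dq i * max (A i ℓ) 0 = dq ℓ * max (-(A ℓ i)) 0 := by
      rw [mul_max_of_nonneg _ _ (le_of_lt (hdq i)), mul_max_of_nonneg _ _ (le_of_lt (hdq ℓ)),
        mul_zero, mul_zero, h1, mul_neg]
    have p2 : dq j * max (A j ℓ) 0 = dq ℓ * max (-(A ℓ j)) 0 := by
      rw [mul_max_of_nonneg _ _ (le_of_lt (hdq j)), mul_max_of_nonneg _ _ (le_of_lt (hdq ℓ)),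
        mul_zero, mul_zero, h2, mul_neg]
    linear_combination h3 + A ℓ j * p1 + max (-(A ℓ j)) 0 * h1 + A ℓ i * p2
      + max (-(A ℓ i)) 0 * h2

private lemma mutate_pext_block (dq : ι → ℚ) (hdq : ∀ i, 0 < dq i)
    (Bt C E E' S : Matrix ι ι ℚ) (ℓ : ι)
    (hskew : ∀ i j, dq i * Bt i j = -(dq j * Bt j i))
    (hE : ∀ i j, E i j = (dq i)⁻¹ * C j i * dq j)
    (hE' : ∀ i j, E' i j = (dq i)⁻¹ *
      ((C * (Jmat ℓ + rowSel ℓ (matPos Bt)) + colSel ℓ (matPos (-C)) * Bt : Matrix ι ι ℚ) j i)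
      * dq j) :
    mutate (fromBlocks Bt (-E) C S) (Sum.inl ℓ) =
      fromBlocks (mutate Bt ℓ) (-E')
        (C * (Jmat ℓ + rowSel ℓ (matPos Bt)) + colSel ℓ (matPos (-C)) * Bt)
        (S + (C * rowSel ℓ (matPos (-E)) - colSel ℓ (matPos (-C)) * E)) := by
  have hdiag : Bt ℓ ℓ = 0 := by
    have h := hskew ℓ ℓ
    have hne := ne_of_gt (hdq ℓ)
    have h0 : dq ℓ * Bt ℓ ℓ = 0 := by linarith
    rcases mul_eq_zero.mp h0 with h' | h'
    · exact absurd h' hne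
    · exact h'
  have hC' : ∀ i j, (C * (Jmat ℓ + rowSel ℓ (matPos Bt)) + colSel ℓ (matPos (-C)) * Bt
        : Matrix ι ι ℚ) i j
      = (if j = ℓ then -(C i j) else C i j) + C i ℓ * max (Bt ℓ j) 0
        + max (-(C i ℓ)) 0 * Bt ℓ j := by
    intro i j
    rw [Matrix.add_apply, mulJrow_apply, colSel_mul_apply]
    simp only [matPos, Matrix.neg_apply]
  ext i j
  rcases i with i | i <;> rcases j with j | j
  · -- (inl, inl) : B block
    simp only [mutate, Matrix.fromBlocks_apply₁₁, Sum.inl.injEq, reduceCtorEq, or_false]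
  · -- (inl, inr) : -E block
    simp only [mutate, Matrix.fromBlocks_apply₁₂, Matrix.fromBlocks_apply₁₁,
      Sum.inl.injEq, reduceCtorEq, or_false, Matrix.neg_apply]
    by_cases hiℓ : i = ℓ
    · subst hiℓ
      rw [if_pos rfl]
      have hkey : E' i j = -(E i j) := by
        rw [hE' i j, hC' j i, hE i j, if_pos rfl, hdiag]
        simp
      rw [hkey]
    · rw [if_neg hiℓ]
      have hℓ := ne_of_gt (hdq ℓ)
      have hBℓi : Bt ℓ i = -((dq ℓ)⁻¹ * dq i * Bt i ℓ) := by
        apply mul_left_cancel₀ hℓ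
        rw [hskew ℓ i]
        field_simp
      have pos1 : (0:ℚ) ≤ (dq ℓ)⁻¹ * dq i := le_of_lt (mul_pos (inv_pos.mpr (hdq ℓ)) (hdq i))
      have pos2 : (0:ℚ) ≤ (dq ℓ)⁻¹ * dq j := le_of_lt (mul_pos (inv_pos.mpr (hdq ℓ)) (hdq j))
      have hpB : max (Bt ℓ i) 0 = (dq ℓ)⁻¹ * dq i * max (-(Bt i ℓ)) 0 := by
        rw [mul_max_of_nonneg _ _ pos1, mul_zero, hBℓi]
        congr 1; ring
      have hpE : max (E ℓ j) 0 = (dq ℓ)⁻¹ * dq j * max (C j ℓ) 0 := by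
        rw [mul_max_of_nonneg _ _ pos2, mul_zero, hE ℓ j]
        congr 1; ring
      have hei : (dq i)⁻¹ * dq i = 1 := inv_mul_cancel₀ (ne_of_gt (hdq i))
      have hkey : E' i j
          = -(-(E i j) + max (Bt i ℓ) 0 * (-(E ℓ j)) + Bt i ℓ * max (E ℓ j) 0) := by
        rw [hE' i j, hC' j i, if_neg hiℓ, hpE, hpB, hBℓi, hE i j, hE ℓ j]
        linear_combination ((dq ℓ)⁻¹ * dq j *
            (C j ℓ * max (-(Bt i ℓ)) 0 - max (-(C j ℓ)) 0 * Bt i ℓ)) * hei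
          + (dq ℓ)⁻¹ * dq j * keyid (C j ℓ) (Bt i ℓ)
      rw [hkey]; ring
  · -- (inr, inl) : C block
    simp only [mutate, Matrix.fromBlocks_apply₂₁, Matrix.fromBlocks_apply₁₁,
      Sum.inl.injEq, reduceCtorEq, false_or]
    by_cases hjℓ : j = ℓ
    · subst hjℓ
      rw [if_pos rfl, hC' i j, if_pos rfl, hdiag]
      simp
    · rw [if_neg hjℓ, hC' i j, if_neg hjℓ]
      linear_combination keyid (C i ℓ) (Bt ℓ j)
  · -- (inr, inr) : S block
    simp only [mutate, Matrix.fromBlocks_apply₂₂, Matrix.fromBlocks_apply₂₁,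
      Matrix.fromBlocks_apply₁₂, reduceCtorEq, or_self, if_false,
      Matrix.neg_apply, Matrix.add_apply, Matrix.sub_apply, neg_neg]
    rw [mul_rowSel_apply, colSel_mul_apply]
    simp only [matPos, Matrix.neg_apply]
    linear_combination (-1 : ℚ) * keyid (C i ℓ) (E ℓ j)

private lemma seedOf_concat {R : Type} [CommRing R] [LinearOrder R] [IsStrictOrderedRing R]
    (B0 : Matrix ι ι R) (p : List ι) (ℓ : ι) :
    seedOf B0 (p ++ [ℓ]) = seedStep B0 (seedOf B0 p) ℓ := by
  simp [seedOf, List.foldl_append]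

private lemma Bpath_concat {R : Type} [CommRing R] [LinearOrder R] [IsStrictOrderedRing R]
    (B0 : Matrix ι ι R) (p : List ι) (ℓ : ι) :
    Bpath B0 (p ++ [ℓ]) = mutate (Bpath B0 p) ℓ := by
  rw [Bpath, seedOf_concat]; rfl

private lemma Cmat_concat {R : Type} [CommRing R] [LinearOrder R] [IsStrictOrderedRing R]
    (B0 : Matrix ι ι R) (p : List ι) (ℓ : ι) :
    Cmat B0 (p ++ [ℓ]) = Cmat B0 p * (Jmat ℓ + rowSel ℓ (matPos (Bpath B0 p)))
      + colSel ℓ (matPos (-(Cmat B0 p))) * Bpath B0 p := by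
  rw [Cmat, seedOf_concat]; rfl

private lemma skew_Bpath (B : Matrix ι ι ℤ) (d : ι → ℤ) (hd : ∀ i, 0 < d i)
    (hskew : (Matrix.diagonal d * B)ᵀ = -(Matrix.diagonal d * B)) (p : List ι) :
    ∀ i j, ((d i : ℚ)) * (Bpath B p).map ((↑) : ℤ → ℚ) i j
      = -(((d j : ℚ)) * (Bpath B p).map ((↑) : ℤ → ℚ) j i) := by
  have hdq : ∀ i, (0:ℚ) < (d i : ℚ) := fun i => by exact_mod_cast hd i
  induction p using List.reverseRecOn with
  | nil =>
    intro i j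
    have h : (Matrix.diagonal d * B)ᵀ j i = (-(Matrix.diagonal d * B)) j i := by rw [hskew]
    rw [Matrix.transpose_apply, Matrix.neg_apply, Matrix.diagonal_mul, Matrix.diagonal_mul] at h
    show ((d i : ℚ)) * ((B i j : ℤ) : ℚ) = -(((d j : ℚ)) * ((B j i : ℤ) : ℚ))
    exact_mod_cast h
  | append_singleton p ℓ ih =>
    rw [Bpath_concat, map_mutate]
    exact skew_mutate _ hdq _ ih ℓ

end AuxProof

section MainAux
variable {n : ℕ}

private lemma dCd_apply (d : Fin n → ℤ) (hd : ∀ i, 0 < d i)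
    (C : Matrix (Fin n) (Fin n) ℤ) (i j : Fin n) :
    dCd d C i j = ((d i : ℚ))⁻¹ * ((C j i : ℤ) : ℚ) * ((d j : ℤ) : ℚ) := by
  have hne : ∀ k, ((d k : ℤ) : ℚ) ≠ 0 := fun k => by
    exact_mod_cast ne_of_gt (hd k)
  have hinv : (Matrix.diagonal fun k => ((d k : ℤ) : ℚ))⁻¹
      = Matrix.diagonal (fun k => (((d k : ℤ) : ℚ))⁻¹) := by
    apply Matrix.inv_eq_right_inv
    rw [Matrix.diagonal_mul_diagonal]
    simp [hne]
  rw [dCd, hinv]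
  rw [Matrix.mul_diagonal, Matrix.diagonal_mul, Matrix.transpose_apply, Matrix.map_apply]

private lemma dCd_one (d : Fin n → ℤ) (hd : ∀ i, 0 < d i) :
    dCd d (1 : Matrix (Fin n) (Fin n) ℤ) = 1 := by
  ext i j
  rw [dCd_apply d hd]
  by_cases h : i = j
  · subst h
    simp [Matrix.one_apply, inv_mul_cancel_left₀,
      (by exact_mod_cast ne_of_gt (hd i) : ((d i : ℤ) : ℚ) ≠ 0)]
  · simp [Matrix.one_apply, h, Ne.symm h]


private lemma sum_concat_take {M : Type*} [AddCommMonoid M] {α : Type}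
    (G : List α → α → M) (p : List α) (ℓ : α) :
    (∑ s : Fin (p ++ [ℓ]).length, G ((p ++ [ℓ]).take s.1) ((p ++ [ℓ]).get s))
      = (∑ s : Fin p.length, G (p.take s.1) (p.get s)) + G p ℓ := by
  have key : ∀ (r : List α), (∑ s : Fin r.length, G (r.take s.1) (r.get s))
      = ∑ i ∈ Finset.range r.length, G (r.take i) (r.getD i ℓ) := by
    intro r
    rw [← Fin.sum_univ_eq_sum_range (fun i => G (r.take i) (r.getD i ℓ)) r.length]
    apply Finset.sum_congr rfl
    intro s _
    congr 1
    rw [List.getD_eq_getElem r ℓ s.2, List.get_eq_getElem]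
  rw [key, key]
  have hlen : (p ++ [ℓ]).length = p.length + 1 := by simp
  rw [hlen, Finset.sum_range_succ]
  congr 1
  · apply Finset.sum_congr rfl
    intro i hi
    rw [Finset.mem_range] at hi
    rw [List.take_append_of_le_length (le_of_lt hi)]
    congr 1
    rw [List.getD_eq_getElem?_getD, List.getD_eq_getElem?_getD, List.getElem?_append,
      if_pos hi]
  · congr 1
    · simp
    · simp [List.getD_eq_getElem?_getD]

end MainAux

/-- block form of the mutated principal extension (without sign-coherence). -/
theorem pext_Bpath_block {n : ℕ} (B : Matrix (Fin n) (Fin n) ℤ) (d : Fin n → ℤ)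
    (hd : ∀ i, 0 < d i)
    (hskew : (Matrix.diagonal d * B)ᵀ = -(Matrix.diagonal d * B)) (p : List (Fin n)) :
    (Bpath (pext B) (p.map Sum.inl)).map ((↑) : ℤ → ℚ) =
      Matrix.fromBlocks ((Bpath B p).map ((↑) : ℤ → ℚ)) (-dCd d (Cmat B p))
        ((Cmat B p).map ((↑) : ℤ → ℚ))
        (∑ s : Fin p.length,
          (((Cmat B (p.take s.1)).map ((↑) : ℤ → ℚ)) *
              rowSel (p.get s) (matPos (-dCd d (Cmat B (p.take s.1))))
            - colSel (p.get s) (matPos (-((Cmat B (p.take s.1)).map ((↑) : ℤ → ℚ)))) *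
              dCd d (Cmat B (p.take s.1)))) := by
  have hdq : ∀ i : Fin n, (0:ℚ) < ((d i : ℤ) : ℚ) := fun i => by exact_mod_cast hd i
  induction p using List.reverseRecOn with
  | nil =>
    have hz : ∀ (f : Fin (List.length ([] : List (Fin n))) → Matrix (Fin n) (Fin n) ℚ),
        ∑ s, f s = 0 := fun f => Finset.sum_eq_zero fun s _ => s.elim0
    rw [show (([] : List (Fin n)).map Sum.inl) = ([] : List (Fin n ⊕ Fin n)) from rfl,
      show Bpath (pext B) [] = pext B from rfl,
      show Bpath B ([] : List (Fin n)) = B from rfl,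
      show Cmat B ([] : List (Fin n)) = 1 from rfl, dCd_one d hd, hz,
      pext, Matrix.fromBlocks_map, map_negM, mapQ_one,
      show ((0 : Matrix (Fin n) (Fin n) ℤ)).map ((↑) : ℤ → ℚ) = 0 from by ext i j; simp]
  | append_singleton p ℓ ih =>
    have hCrec : (Cmat B (p ++ [ℓ])).map ((↑) : ℤ → ℚ)
        = ((Cmat B p).map ((↑) : ℤ → ℚ))
            * (Jmat ℓ + rowSel ℓ (matPos ((Bpath B p).map ((↑) : ℤ → ℚ))))
          + colSel ℓ (matPos (-((Cmat B p).map ((↑) : ℤ → ℚ))))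
            * ((Bpath B p).map ((↑) : ℤ → ℚ)) := by
      rw [Cmat_concat, mapQ_add, mapQ_mul, mapQ_mul, mapQ_add, map_Jmat, map_rowSel,
        map_matPos, map_colSel, map_matPos, map_negM]
    have hmap : (Bpath (pext B) ((p ++ [ℓ]).map Sum.inl)).map ((↑) : ℤ → ℚ)
        = mutate ((Bpath (pext B) (p.map Sum.inl)).map ((↑) : ℤ → ℚ)) (Sum.inl ℓ) := by
      rw [List.map_append, show ([ℓ] : List (Fin n)).map Sum.inl = [Sum.inl ℓ] from rfl,
        Bpath_concat, map_mutate]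
    have hE' : ∀ i j, dCd d (Cmat B (p ++ [ℓ])) i j
        = (((d i : ℤ) : ℚ))⁻¹ *
          ((((Cmat B p).map ((↑) : ℤ → ℚ))
              * (Jmat ℓ + rowSel ℓ (matPos ((Bpath B p).map ((↑) : ℤ → ℚ))))
            + colSel ℓ (matPos (-((Cmat B p).map ((↑) : ℤ → ℚ))))
              * ((Bpath B p).map ((↑) : ℤ → ℚ)) : Matrix (Fin n) (Fin n) ℚ) j i)
          * ((d j : ℤ) : ℚ) := by
      intro i j
      rw [← hCrec, dCd_apply d hd]
      rfl
    rw [hmap, ih,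
      mutate_pext_block (fun i => ((d i : ℤ) : ℚ)) hdq
        ((Bpath B p).map ((↑) : ℤ → ℚ)) ((Cmat B p).map ((↑) : ℤ → ℚ))
        (dCd d (Cmat B p)) (dCd d (Cmat B (p ++ [ℓ]))) _ ℓ
        (skew_Bpath B d hd hskew p)
        (fun i j => dCd_apply d hd (Cmat B p) i j) hE',
      sum_concat_take
        (fun q k => ((Cmat B q).map ((↑) : ℤ → ℚ)) * rowSel k (matPos (-dCd d (Cmat B q)))
          - colSel k (matPos (-((Cmat B q).map ((↑) : ℤ → ℚ)))) * dCd d (Cmat B q)) p ℓ,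
      ← hCrec, Bpath_concat, map_mutate]
end

section
/- Let B be a skew-symmetrizable n×n integer matrix with positive diagonal skew-symmetrizer D, and let t be reached from t_0 by the path (i_1,…,i_m) with intermediate vertices t_0, t_1, …, t_m = t. Then the 2n×2n C-matrix of the principal extension satisfies the block identity C^{B̄;t_0}_t = [[C^{B;t_0}_t, X], [O, I_n]], where X = Σ_{s=0}^{m−1} ( C^{B;t_0}_{t_s} [D^{−1}(C^{B;t_0}_{t_s})^T D]^{i_{s+1}•}_+ − [C^{B;t_0}_{t_s}]^{•i_{s+1}}_+ D^{−1}(C^{B;t_0}_{t_s})^T D ). -/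
open Matrix

section ProofAux

open Matrix

namespace PextAux

/-- `max (-x) 0 = max x 0 - x`. -/
lemma negPart {R : Type} [CommRing R] [LinearOrder R] [IsStrictOrderedRing R] (x : R) : max (-x) 0 = max x 0 - x := by
  rcases le_total x 0 with h | h
  · rw [max_eq_left (neg_nonneg.mpr h), max_eq_right h]; ring
  · rw [max_eq_right (neg_nonpos.mpr h), max_eq_left h]; ring

lemma maxswap {r s x y : ℚ} (hr : 0 < r) (hs : 0 < s) (h : r * x = -(s * y)) :
    r * max x 0 = s * max (-y) 0 := by
  rw [mul_max_of_nonneg _ _ hr.le, mul_max_of_nonneg _ _ hs.le, mul_zero, mul_zero, h, mul_neg]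

variable {ι : Type} [Fintype ι] [DecidableEq ι] {R : Type} [CommRing R] [LinearOrder R] [IsStrictOrderedRing R]

lemma seedStep_C_apply (B0 : Matrix ι ι R) (s : SeedData ι R) (ℓ i j : ι) :
    (seedStep B0 s ℓ).C i j =
      (if j = ℓ then -(s.C i j) else s.C i j)
        + s.C i ℓ * max (s.B ℓ j) 0 + max (-(s.C i ℓ)) 0 * s.B ℓ j := by
  have hC : (seedStep B0 s ℓ).C
      = s.C * (Jmat ℓ + rowSel ℓ (matPos s.B)) + colSel ℓ (matPos (-s.C)) * s.B := rfl
  rw [hC]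
  have h1 : (s.C * rowSel ℓ (matPos s.B)) i j = s.C i ℓ * max (s.B ℓ j) 0 := by
    simp [Matrix.mul_apply, rowSel, matPos, mul_ite, mul_zero, Finset.sum_ite_eq']
  have h2 : (colSel ℓ (matPos (-s.C)) * s.B) i j = max (-(s.C i ℓ)) 0 * s.B ℓ j := by
    simp [Matrix.mul_apply, colSel, matPos, ite_mul, zero_mul, Finset.sum_ite_eq',
      Matrix.neg_apply]
  rw [Matrix.add_apply, Matrix.mul_add, Matrix.add_apply, Jmat, Matrix.mul_diagonal, h1, h2]
  split_ifs with h
  · ring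
  · ring

lemma seedOf_append (B0 : Matrix ι ι R) (p : List ι) (k : ι) :
    seedOf B0 (p ++ [k]) = seedStep B0 (seedOf B0 p) k := by
  simp [seedOf, List.foldl_append]

lemma skewstep {di dj dk aij aik aki akj ajk aji : ℚ}
    (hdi : 0 < di) (hdj : 0 < dj) (hdk : 0 < dk)
    (hij : di * aij = -(dj * aji)) (hik : di * aik = -(dk * aki))
    (hkj : dk * akj = -(dj * ajk)) :
    di * (aij + max aik 0 * akj + aik * max (-akj) 0)
      = -(dj * (aji + max ajk 0 * aki + ajk * max (-aki) 0)) := by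
  have R1 : di * max aik 0 = dk * max (-aki) 0 := maxswap hdi hdk hik
  have R2 : dj * max ajk 0 = dk * max (-akj) 0 :=
    maxswap hdj hdk (by linarith)
  linear_combination hij + akj * R1 + max (-aki) 0 * hkj + max (-akj) 0 * hik + aki * R2

lemma step2 {di dj dk pij pkj bik bki cji cjk : ℚ}
    (hdi : 0 < di) (hdj : 0 < dj) (hdk : 0 < dk)
    (h1 : di * pij = -(dj * cji)) (h2 : dk * pkj = -(dj * cjk))
    (h3 : di * bik = -(dk * bki)) :
    di * (pij + max bik 0 * pkj + bik * max (-pkj) 0)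
      = -(dj * (cji + cjk * max bki 0 + max (-cjk) 0 * bki)) := by
  have Ra : di * max bik 0 = dk * max (-bki) 0 := maxswap hdi hdk h3
  have Rb : dj * max cjk 0 = dk * max (-pkj) 0 :=
    maxswap hdj hdk (by linarith)
  have N1 : max (-bki) 0 = max bki 0 - bki := negPart bki
  have N2 : max (-cjk) 0 = max cjk 0 - cjk := negPart cjk
  linear_combination h1 + pkj * Ra + max (-bki) 0 * h2 + (-(dj * cjk)) * N1
    + max (-pkj) 0 * h3 + bki * Rb + (dj * bki) * N2

lemma diag_inv_q {n : ℕ} (d : Fin n → ℤ) (hd : ∀ i, 0 < d i) :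
    (Matrix.diagonal fun i => (d i : ℚ))⁻¹ = Matrix.diagonal fun i => ((d i : ℚ))⁻¹ := by
  apply Matrix.inv_eq_right_inv
  rw [Matrix.diagonal_mul_diagonal]
  have h : (fun i => (d i : ℚ) * ((d i : ℚ))⁻¹) = fun _ => (1 : ℚ) :=
    funext fun i => mul_inv_cancel₀ (Int.cast_ne_zero.mpr (hd i).ne')
  rw [h, Matrix.diagonal_one]

lemma dcd_entry {n : ℕ} (d : Fin n → ℤ) (hd : ∀ i, 0 < d i)
    (C : Matrix (Fin n) (Fin n) ℤ) (i j : Fin n) :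
    dCd d C i j = ((d i : ℚ))⁻¹ * (C j i : ℚ) * (d j : ℚ) := by
  rw [dCd, diag_inv_q d hd, Matrix.mul_diagonal, Matrix.diagonal_mul]
  simp [Matrix.transpose_apply, Matrix.map_apply]

noncomputable def Xterm {n : ℕ} (B : Matrix (Fin n) (Fin n) ℤ) (d : Fin n → ℤ)
    (q : List (Fin n)) (k : Fin n) (i j : Fin n) : ℚ :=
  ((Cmat B q i k : ℤ) : ℚ) * max (dCd d (Cmat B q) k j) 0
    - max (((Cmat B q i k : ℤ) : ℚ)) 0 * dCd d (Cmat B q) k j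

noncomputable def Xfun {n : ℕ} (B : Matrix (Fin n) (Fin n) ℤ) (d : Fin n → ℤ)
    (p : List (Fin n)) (i j : Fin n) : ℚ :=
  ∑ s : Fin p.length, Xterm B d (p.take s.1) (p.get s) i j

lemma Xfun_nil {n : ℕ} (B : Matrix (Fin n) (Fin n) ℤ) (d : Fin n → ℤ) (i j : Fin n) :
    Xfun B d [] i j = 0 := by
  simp [Xfun]

lemma Xfun_concat {n : ℕ} (B : Matrix (Fin n) (Fin n) ℤ) (d : Fin n → ℤ)
    (p : List (Fin n)) (k : Fin n) (i j : Fin n) :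
    Xfun B d (p ++ [k]) i j = Xfun B d p i j + Xterm B d p k i j := by
  classical
  set L := p ++ [k] with hL
  have hlen : L.length = p.length + 1 := by simp [hL]
  set g : ℕ → ℚ := fun m =>
    if h : m < L.length then Xterm B d (L.take m) (L.get ⟨m, h⟩) i j else 0 with hg
  have h1 : Xfun B d L i j = ∑ m ∈ Finset.range L.length, g m := by
    rw [Xfun, ← Fin.sum_univ_eq_sum_range g L.length]
    refine Finset.sum_congr rfl fun s _ => ?_
    simp only [hg]
    rw [dif_pos s.2]
  have h2 : Xfun B d p i j = ∑ m ∈ Finset.range p.length, g m := by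
    rw [Xfun, ← Fin.sum_univ_eq_sum_range g p.length]
    refine Finset.sum_congr rfl fun s _ => ?_
    have hs : (s : ℕ) < L.length := by omega
    rw [hg]
    simp only [dif_pos hs]
    have ht : L.take (s : ℕ) = p.take (s : ℕ) := by
      rw [hL, List.take_append,
        Nat.sub_eq_zero_of_le s.2.le, List.take_zero, List.append_nil]
    have hget : L.get ⟨(s : ℕ), hs⟩ = p.get s := by
      rw [List.get_eq_getElem, List.get_eq_getElem]
      exact List.getElem_append_left s.2
    rw [ht, hget]
  have h3 : g p.length = Xterm B d p k i j := by
    have hp : p.length < L.length := by omega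
    rw [hg]
    simp only [dif_pos hp]
    have ht : L.take p.length = p := by rw [hL]; exact List.take_left
    have hget : L.get ⟨p.length, hp⟩ = k := by
      rw [List.get_eq_getElem]
      exact List.getElem_concat_length rfl _
    rw [ht, hget]
  rw [h1, h2, hlen, Finset.sum_range_succ, h3]

lemma Xsum_apply {n : ℕ} (B : Matrix (Fin n) (Fin n) ℤ) (d : Fin n → ℤ)
    (p : List (Fin n)) (i j : Fin n) :
    (∑ s : Fin p.length,
        (((Cmat B (p.take s.1)).map ((↑) : ℤ → ℚ)) *
            rowSel (p.get s) (matPos (dCd d (Cmat B (p.take s.1))))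
          - colSel (p.get s) (matPos ((Cmat B (p.take s.1)).map ((↑) : ℤ → ℚ))) *
            dCd d (Cmat B (p.take s.1)))) i j = Xfun B d p i j := by
  rw [Matrix.sum_apply, Xfun]
  refine Finset.sum_congr rfl fun s _ => ?_
  rw [Matrix.sub_apply, Xterm]
  have h1 : (((Cmat B (p.take s.1)).map ((↑) : ℤ → ℚ)) *
      rowSel (p.get s) (matPos (dCd d (Cmat B (p.take s.1))))) i j
      = ((Cmat B (p.take s.1) i (p.get s) : ℤ) : ℚ) * max (dCd d (Cmat B (p.take s.1)) (p.get s) j) 0 := by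
    simp [Matrix.mul_apply, rowSel, matPos, mul_ite, mul_zero, Finset.sum_ite_eq',
      Matrix.map_apply]
  have h2 : (colSel (p.get s) (matPos ((Cmat B (p.take s.1)).map ((↑) : ℤ → ℚ))) *
      dCd d (Cmat B (p.take s.1))) i j
      = max (((Cmat B (p.take s.1) i (p.get s) : ℤ) : ℚ)) 0 * dCd d (Cmat B (p.take s.1)) (p.get s) j := by
    simp [Matrix.mul_apply, colSel, matPos, ite_mul, zero_mul, Finset.sum_ite_eq',
      Matrix.map_apply]
  rw [h1, h2]

lemma diag_zero {dk x : ℚ} (h : 0 < dk) (he : dk * x = -(dk * x)) : x = 0 := by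
  have h2 : (2 * dk) * x = 0 := by linarith
  rcases mul_eq_zero.mp h2 with h3 | h3
  · nlinarith
  · exact h3

lemma skew_mutate_rat {n : ℕ} {d : Fin n → ℤ} (hd : ∀ i, 0 < d i)
    {A : Matrix (Fin n) (Fin n) ℤ}
    (h : ∀ i j, (d i : ℚ) * (A i j : ℚ) = -((d j : ℚ) * (A j i : ℚ))) (k : Fin n) :
    ∀ i j, (d i : ℚ) * ((mutate A k i j : ℤ) : ℚ) = -((d j : ℚ) * ((mutate A k j i : ℤ) : ℚ)) := by
  have hdq : ∀ i, (0:ℚ) < d i := fun i => by exact_mod_cast hd i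
  intro i j
  by_cases hc : i = k ∨ j = k
  · have hc' : j = k ∨ i = k := hc.symm
    simp only [mutate, if_pos hc, if_pos hc']
    push_cast
    linarith [h i j]
  · have hc' : ¬(j = k ∨ i = k) := fun h' => hc h'.symm
    simp only [mutate, if_neg hc, if_neg hc']
    push_cast
    exact skewstep (hdq i) (hdq j) (hdq k) (h i j) (h i k) (h k j)

lemma key {n : ℕ} (B : Matrix (Fin n) (Fin n) ℤ) (d : Fin n → ℤ) (hd : ∀ i, 0 < d i)
    (hsk : ∀ i j, (d i : ℚ) * (B i j : ℚ) = -((d j : ℚ) * (B j i : ℚ)))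
    (p : List (Fin n)) :
    (∀ i j, (d i : ℚ) * ((Bpath B p i j : ℤ) : ℚ) = -((d j : ℚ) * ((Bpath B p j i : ℤ) : ℚ))) ∧
    (∀ i j, (seedOf (pext B) (p.map Sum.inl)).B (Sum.inl i) (Sum.inl j) = Bpath B p i j) ∧
    (∀ i j, (d i : ℚ) * ((seedOf (pext B) (p.map Sum.inl)).B (Sum.inl i) (Sum.inr j) : ℚ)
      = -((d j : ℚ) * ((Cmat B p j i : ℤ) : ℚ))) ∧
    (∀ i j, (seedOf (pext B) (p.map Sum.inl)).C (Sum.inl i) (Sum.inl j) = Cmat B p i j) ∧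
    (∀ i j, (seedOf (pext B) (p.map Sum.inl)).C (Sum.inr i) (Sum.inl j) = 0) ∧
    (∀ i j, (seedOf (pext B) (p.map Sum.inl)).C (Sum.inr i) (Sum.inr j)
      = if i = j then 1 else 0) ∧
    (∀ i j, ((seedOf (pext B) (p.map Sum.inl)).C (Sum.inl i) (Sum.inr j) : ℚ)
      = Xfun B d p i j) := by
  have hdq : ∀ i, (0:ℚ) < d i := fun i => by exact_mod_cast hd i
  induction p using List.reverseRecOn with
  | nil =>
    refine ⟨?_, ?_, ?_, ?_, ?_, ?_, ?_⟩ <;> intro i j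
    · exact hsk i j
    · simp [seedOf, pext, Bpath]
    · simp only [List.map_nil, seedOf, List.foldl_nil]
      show (d i : ℚ) * ((pext B) (Sum.inl i) (Sum.inr j) : ℚ)
        = -((d j : ℚ) * ((1 : Matrix (Fin n) (Fin n) ℤ) j i : ℚ))
      by_cases hij : i = j
      · subst hij
        simp [pext, Matrix.one_apply]
      · simp [pext, Matrix.one_apply, hij, Ne.symm hij]
    · simp only [List.map_nil, seedOf, List.foldl_nil]
      show (1 : Matrix (Fin n ⊕ Fin n) (Fin n ⊕ Fin n) ℤ) _ _
        = (1 : Matrix (Fin n) (Fin n) ℤ) i j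
      simp [Matrix.one_apply]
    · simp only [List.map_nil, seedOf, List.foldl_nil]
      show (1 : Matrix (Fin n ⊕ Fin n) (Fin n ⊕ Fin n) ℤ) _ _ = 0
      simp [Matrix.one_apply]
    · simp only [List.map_nil, seedOf, List.foldl_nil]
      show (1 : Matrix (Fin n ⊕ Fin n) (Fin n ⊕ Fin n) ℤ) _ _ = _
      simp [Matrix.one_apply]
    · simp only [List.map_nil, seedOf, List.foldl_nil, Xfun_nil]
      show (((1 : Matrix (Fin n ⊕ Fin n) (Fin n ⊕ Fin n) ℤ) _ _ : ℤ) : ℚ) = 0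
      simp [Matrix.one_apply]
  | append_singleton p k ih =>
    obtain ⟨ih1, ih2, ih3, ih4, ih5, ih6, ih7⟩ := ih
    have hmap : (p ++ [k]).map (Sum.inl : Fin n → Fin n ⊕ Fin n)
        = p.map Sum.inl ++ [Sum.inl k] := by simp
    set E := seedOf (pext B) (p.map Sum.inl) with hEdef
    have hE : seedOf (pext B) ((p ++ [k]).map Sum.inl) = seedStep (pext B) E (Sum.inl k) := by
      rw [hmap, seedOf_append]
    have hEB : (seedStep (pext B) E (Sum.inl k)).B = mutate E.B (Sum.inl k) := rfl
    have hBp : Bpath B (p ++ [k]) = mutate (Bpath B p) k := by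
      show (seedOf B (p ++ [k])).B = _
      rw [seedOf_append]; rfl
    have hCp : ∀ i j, Cmat B (p ++ [k]) i j
        = (if j = k then -(Cmat B p i j) else Cmat B p i j)
          + Cmat B p i k * max (Bpath B p k j) 0
          + max (-(Cmat B p i k)) 0 * Bpath B p k j := by
      intro i j
      show (seedOf B (p ++ [k])).C i j = _
      rw [seedOf_append]
      exact seedStep_C_apply B (seedOf B p) k i j
    have hBkk : Bpath B p k k = 0 := by
      have h0 : ((Bpath B p k k : ℤ) : ℚ) = 0 := diag_zero (hdq k) (ih1 k k)
      exact_mod_cast h0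
    have new1 : ∀ i j, (d i : ℚ) * ((Bpath B (p ++ [k]) i j : ℤ) : ℚ)
        = -((d j : ℚ) * ((Bpath B (p ++ [k]) j i : ℤ) : ℚ)) := by
      intro i j
      rw [hBp]
      exact skew_mutate_rat hd ih1 k i j
    refine ⟨new1, ?_, ?_, ?_, ?_, ?_, ?_⟩ <;> intro i j
    · -- top-left of B
      rw [hE, hEB, hBp]
      show mutate E.B (Sum.inl k) (Sum.inl i) (Sum.inl j) = mutate (Bpath B p) k i j
      simp only [mutate, Sum.inl.injEq, ih2]
    · -- top-right of B
      rw [hE, hEB]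
      by_cases hik : i = k
      · rw [hik, hCp j k]
        simp only [mutate]
        simp only [true_or, if_true, hBkk]
        norm_num
        linarith [ih3 k j]
      · have hc1 : ¬((Sum.inl i : Fin n ⊕ Fin n) = Sum.inl k ∨ (Sum.inr j : Fin n ⊕ Fin n) = Sum.inl k) := by
          simp [hik]
        rw [hCp j i]
        simp only [mutate, if_neg hc1, if_neg hik, ih2 i k]
        push_cast
        exact step2 (hdq i) (hdq j) (hdq k) (ih3 i j) (ih3 k j) (ih1 i k)
    · -- C top-left
      rw [hE, seedStep_C_apply (pext B) E (Sum.inl k) (Sum.inl i) (Sum.inl j), hCp i j]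
      simp only [Sum.inl.injEq, ih4, ih2]
    · -- C bottom-left
      rw [hE, seedStep_C_apply (pext B) E (Sum.inl k) (Sum.inr i) (Sum.inl j)]
      simp [ih5]
    · -- C bottom-right
      rw [hE, seedStep_C_apply (pext B) E (Sum.inl k) (Sum.inr i) (Sum.inr j)]
      simp [ih5, ih6]
    · -- C top-right
      rw [hE, seedStep_C_apply (pext B) E (Sum.inl k) (Sum.inl i) (Sum.inr j), Xfun_concat]
      have hne : (Sum.inr j : Fin n ⊕ Fin n) ≠ Sum.inl k := by simp
      rw [if_neg hne]
      push_cast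
      rw [ih7 i j]
      have hc : ((E.C (Sum.inl i) (Sum.inl k) : ℤ) : ℚ) = ((Cmat B p i k : ℤ) : ℚ) := by
        rw [ih4]
      rw [hc]
      have hdk : ((d k : ℚ)) ≠ 0 := (hdq k).ne'
      have h4 : ((E.B (Sum.inl k) (Sum.inr j) : ℤ) : ℚ)
          = (d k : ℚ)⁻¹ * (-((d j : ℚ) * ((Cmat B p j k : ℤ) : ℚ))) := by
        rw [← ih3 k j, inv_mul_cancel_left₀ hdk]
      have hq : dCd d (Cmat B p) k j = -((E.B (Sum.inl k) (Sum.inr j) : ℤ) : ℚ) := by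
        rw [dcd_entry d hd, h4]; ring
      rw [Xterm, hq]
      linear_combination (-((Cmat B p i k : ℤ) : ℚ)) * negPart ((E.B (Sum.inl k) (Sum.inr j) : ℤ) : ℚ)
        + ((E.B (Sum.inl k) (Sum.inr j) : ℤ) : ℚ) * negPart ((Cmat B p i k : ℤ) : ℚ)

end PextAux

end ProofAux


/-- block form of the `C`-matrix of the principal extension
(without sign-coherence). -/
theorem pext_Cmat_block {n : ℕ} (B : Matrix (Fin n) (Fin n) ℤ) (d : Fin n → ℤ)
    (hd : ∀ i, 0 < d i)
    (hskew : (Matrix.diagonal d * B)ᵀ = -(Matrix.diagonal d * B)) (p : List (Fin n)) :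
    (Cmat (pext B) (p.map Sum.inl)).map ((↑) : ℤ → ℚ) =
      Matrix.fromBlocks ((Cmat B p).map ((↑) : ℤ → ℚ))
        (∑ s : Fin p.length,
          (((Cmat B (p.take s.1)).map ((↑) : ℤ → ℚ)) *
              rowSel (p.get s) (matPos (dCd d (Cmat B (p.take s.1))))
            - colSel (p.get s) (matPos ((Cmat B (p.take s.1)).map ((↑) : ℤ → ℚ))) *
              dCd d (Cmat B (p.take s.1))))
        0 1 := by
  have hsk : ∀ i j, (d i : ℚ) * (B i j : ℚ) = -((d j : ℚ) * (B j i : ℚ)) := by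
    intro i j
    have h := congrFun (congrFun hskew j) i
    simp only [Matrix.transpose_apply, Matrix.neg_apply, Matrix.diagonal_mul] at h
    exact_mod_cast h
  obtain ⟨k1, k2, k3, k4, k5, k6, k7⟩ := PextAux.key B d hd hsk p
  ext i j
  cases i with
  | inl i =>
    cases j with
    | inl j =>
      rw [Matrix.map_apply, Matrix.fromBlocks_apply₁₁, Matrix.map_apply]
      exact_mod_cast congrArg (Int.cast : ℤ → ℚ) (k4 i j)
    | inr j =>
      rw [Matrix.map_apply, Matrix.fromBlocks_apply₁₂, PextAux.Xsum_apply B d p i j]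
      exact k7 i j
  | inr i =>
    cases j with
    | inl j =>
      rw [Matrix.map_apply, Matrix.fromBlocks_apply₂₁, Matrix.zero_apply]
      exact_mod_cast congrArg (Int.cast : ℤ → ℚ) (k5 i j)
    | inr j =>
      rw [Matrix.map_apply, Matrix.fromBlocks_apply₂₂, Matrix.one_apply]
      show (((seedOf (pext B) (p.map Sum.inl)).C (Sum.inr i) (Sum.inr j) : ℤ) : ℚ) = _
      rw [k6 i j]
      split_ifs <;> simp
end

section
/- Let B be a skew-symmetrizable n×n integer matrix and let t be reached from t_0 by a path with all directions in {1,…,n}. Then the 2n×2n G-matrix of the principal extension is block diagonal: G^{B̄;t_0}_t = [[G^{B;t_0}_t, O], [O, I_n]]. -/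
open Matrix

section Aux

variable {ι : Type} [Fintype ι] [DecidableEq ι]

lemma seedStep_C_apply (B0 : Matrix ι ι ℤ) (s : SeedData ι ℤ) (ℓ i j : ι) :
    (seedStep B0 s ℓ).C i j =
      s.C i j * (if j = ℓ then -1 else 1) + s.C i ℓ * max (s.B ℓ j) 0
        + max (-(s.C i ℓ)) 0 * s.B ℓ j := by
  simp only [seedStep, Matrix.add_apply, Matrix.mul_apply, Matrix.add_apply, Jmat, rowSel,
    colSel, matPos, Matrix.diagonal_apply, Matrix.neg_apply]
  rw [Finset.sum_congr rfl (fun k _ => by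
      rw [show (if k = j then if k = ℓ then (-1:ℤ) else 1 else 0) +
          (if k = ℓ then max (s.B k j) 0 else 0) =
          (if k = j then (if j = ℓ then (-1:ℤ) else 1) else 0) +
          (if k = ℓ then max (s.B ℓ j) 0 else 0) by
        split <;> split <;> simp_all, mul_add])]
  rw [Finset.sum_add_distrib]
  simp [Finset.sum_ite_eq', mul_comm]

lemma seedStep_G_apply (B0 : Matrix ι ι ℤ) (s : SeedData ι ℤ) (ℓ i j : ι) :
    (seedStep B0 s ℓ).G i j =
      s.G i j * (if j = ℓ then -1 else 1) +
        (if j = ℓ then (∑ k, s.G i k * max (s.B k ℓ) 0)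
          - ∑ k, B0 i k * max (s.C k ℓ) 0 else 0) := by
  simp only [seedStep, Matrix.sub_apply, Matrix.mul_apply, Matrix.add_apply, Jmat, rowSel,
    colSel, matPos, Matrix.diagonal_apply]
  rw [Finset.sum_congr rfl (fun k _ => mul_add (s.G i k) _ _), Finset.sum_add_distrib]
  by_cases h : j = ℓ <;> simp [h, Finset.sum_ite_eq', mul_ite] <;> ring

lemma seedStep_B_apply (B0 : Matrix ι ι ℤ) (s : SeedData ι ℤ) (ℓ i j : ι) :
    (seedStep B0 s ℓ).B i j =
      if i = ℓ ∨ j = ℓ then -(s.B i j)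
      else s.B i j + max (s.B i ℓ) 0 * s.B ℓ j + s.B i ℓ * max (-(s.B ℓ j)) 0 := rfl

lemma max_swap_identity (x b : ℤ) :
    max x 0 * b + x * max (-b) 0 = x * max b 0 + max (-x) 0 * b := by
  rcases le_total x 0 with hx | hx <;> rcases le_total b 0 with hb | hb <;>
    simp [max_eq_left, max_eq_right, neg_nonneg.mpr, neg_nonpos.mpr, hx, hb] <;> ring

lemma mutate_skew {ι : Type} [DecidableEq ι] (d : ι → ℤ) (hd : ∀ i, 0 < d i) (A : Matrix ι ι ℤ)
    (h : ∀ i j, d i * A i j = -(d j * A j i)) (k : ι) :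
    ∀ i j, d i * mutate A k i j = -(d j * mutate A k j i) := by
  intro i j
  have hmax : ∀ (c : ι) (x : ℤ), d c * max x 0 = max (d c * x) 0 := by
    intro c x
    rw [mul_max_of_nonneg _ _ (hd c).le, mul_zero]
  simp only [mutate]
  by_cases hik : i = k
  · rw [if_pos (Or.inl hik), if_pos (Or.inr hik), mul_neg, mul_neg, h i j, neg_neg]
  by_cases hjk : j = k
  · rw [if_pos (Or.inr hjk), if_pos (Or.inl hjk), mul_neg, mul_neg, h i j, neg_neg]
  simp only [hik, hjk, or_self, if_false]
  have h1 : d i * (max (A i k) 0 * A k j) = -(d j * (A j k * max (-(A k i)) 0)) := by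
    have e1 : d i * max (A i k) 0 = d k * max (-(A k i)) 0 := by
      rw [hmax, hmax, h i k]; ring_nf
    have e2 : d k * A k j = -(d j * A j k) := h k j
    calc d i * (max (A i k) 0 * A k j) = (d i * max (A i k) 0) * A k j := by ring
      _ = (d k * max (-(A k i)) 0) * A k j := by rw [e1]
      _ = max (-(A k i)) 0 * (d k * A k j) := by ring
      _ = max (-(A k i)) 0 * -(d j * A j k) := by rw [e2]
      _ = -(d j * (A j k * max (-(A k i)) 0)) := by ring
  have h2 : d i * (A i k * max (-(A k j)) 0) = -(d j * (max (A j k) 0 * A k i)) := by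
    have e1 : d j * max (A j k) 0 = d k * max (-(A k j)) 0 := by
      rw [hmax, hmax, h j k]; ring_nf
    have e2 : d i * A i k = -(d k * A k i) := h i k
    calc d i * (A i k * max (-(A k j)) 0) = (d i * A i k) * max (-(A k j)) 0 := by ring
      _ = -(d k * A k i) * max (-(A k j)) 0 := by rw [e2]
      _ = -((d k * max (-(A k j)) 0) * A k i) := by ring
      _ = -((d j * max (A j k) 0) * A k i) := by rw [e1]
      _ = -(d j * (max (A j k) 0 * A k i)) := by ring
  have h0 := h i j
  linarith [h1, h2, h0]

lemma seedOf_append (B0 : Matrix ι ι ℤ) (p : List ι) (ℓ : ι) :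
    seedOf B0 (p ++ [ℓ]) = seedStep B0 (seedOf B0 p) ℓ := by
  unfold seedOf
  rw [List.foldl_append, List.foldl_cons, List.foldl_nil]

end Aux

/-- The master induction for the principal extension. -/
lemma pext_master {n : ℕ} (B : Matrix (Fin n) (Fin n) ℤ) (d : Fin n → ℤ)
    (hd : ∀ i, 0 < d i) (hskew : ∀ i j, d i * B i j = -(d j * B j i)) (p : List (Fin n)) :
    (∀ i j, d i * (seedOf B p).B i j = -(d j * (seedOf B p).B j i)) ∧
    (∀ i j, (seedOf (pext B) (p.map Sum.inl)).B (Sum.inl i) (Sum.inl j) = (seedOf B p).B i j) ∧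
    (∀ i j, (seedOf (pext B) (p.map Sum.inl)).B (Sum.inr i) (Sum.inl j) = (seedOf B p).C i j) ∧
    (∀ i j, (seedOf (pext B) (p.map Sum.inl)).C (Sum.inl i) (Sum.inl j) = (seedOf B p).C i j) ∧
    (∀ i j, (seedOf (pext B) (p.map Sum.inl)).C (Sum.inr i) (Sum.inl j) = 0) ∧
    (∀ i j, (seedOf (pext B) (p.map Sum.inl)).C (Sum.inr i) (Sum.inr j) =
      if i = j then 1 else 0) ∧
    (∀ i j, (seedOf (pext B) (p.map Sum.inl)).G (Sum.inl i) (Sum.inl j) = (seedOf B p).G i j) ∧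
    (∀ i j, (seedOf (pext B) (p.map Sum.inl)).G (Sum.inl i) (Sum.inr j) = 0) ∧
    (∀ i j, (seedOf (pext B) (p.map Sum.inl)).G (Sum.inr i) (Sum.inl j) = 0) ∧
    (∀ i j, (seedOf (pext B) (p.map Sum.inl)).G (Sum.inr i) (Sum.inr j) =
      if i = j then 1 else 0) := by
  induction p using List.reverseRecOn with
  | nil =>
    refine ⟨hskew, ?_, ?_, ?_, ?_, ?_, ?_, ?_, ?_, ?_⟩ <;> intro i j <;>
      simp [seedOf, pext, Matrix.one_apply, Matrix.fromBlocks]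
  | append_singleton p ℓ ih =>
    obtain ⟨h1, h2, h3, h4, h5, h6, h7, h8, h9, h10⟩ := ih
    set s := seedOf B p with hs
    set t := seedOf (pext B) (p.map Sum.inl) with ht
    have hBll : s.B ℓ ℓ = 0 := by
      have hz : d ℓ * s.B ℓ ℓ = 0 := by linarith [h1 ℓ ℓ]
      exact (mul_eq_zero.mp hz).resolve_left (hd ℓ).ne'
    rw [List.map_append, List.map_cons, List.map_nil]
    rw [seedOf_append, seedOf_append, ← hs, ← ht]
    refine ⟨?_, ?_, ?_, ?_, ?_, ?_, ?_, ?_, ?_, ?_⟩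
    · exact mutate_skew d hd s.B h1 ℓ
    · intro i j
      simp only [seedStep_B_apply, Sum.inl.injEq, h2]
    · intro i j
      rw [seedStep_B_apply, seedStep_C_apply]
      by_cases hj : j = ℓ
      · simp [hj, h3, hBll]
      · simp only [Sum.inl.injEq, hj, if_false, or_false, false_or,
          show (Sum.inr i : Fin n ⊕ Fin n) = Sum.inl ℓ ↔ False by simp, h3, h2]
        have := max_swap_identity (s.C i ℓ) (s.B ℓ j)
        linarith
    · intro i j
      simp only [seedStep_C_apply, Sum.inl.injEq, h4, h2]
    · intro i j
      simp [seedStep_C_apply, h5]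
    · intro i j
      simp [seedStep_C_apply, h5, h6]
    · intro i j
      simp only [seedStep_G_apply, Sum.inl.injEq, Fintype.sum_sum_type, h7, h8, h4, h5,
        h2, pext, Matrix.fromBlocks_apply₁₁, Matrix.fromBlocks_apply₁₂, Matrix.neg_apply,
        Matrix.one_apply, max_self, mul_zero, zero_mul, Finset.sum_const_zero, add_zero,
        sub_zero]
    · intro i j
      simp [seedStep_G_apply, h8]
    · intro i j
      simp only [seedStep_G_apply, Sum.inl.injEq, Fintype.sum_sum_type, h9, h10, h4, h5,
        h3, pext, Matrix.fromBlocks_apply₂₁, Matrix.fromBlocks_apply₂₂, Matrix.one_apply,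
        Matrix.zero_apply, max_self, mul_zero, zero_mul, Finset.sum_const_zero, add_zero,
        zero_add, ite_mul, one_mul, Finset.sum_ite_eq, Finset.mem_univ, if_true]
      by_cases hj : j = ℓ <;> simp [hj]
    · intro i j
      simp [seedStep_G_apply, h10]

/-- the `G`-matrix of the principal extension is block diagonal. -/
theorem pext_Gmat_blockDiagonal {n : ℕ}
    (B : Matrix (Fin n) (Fin n) ℤ) (hB : IsSkewSymmetrizable B) (p : List (Fin n)) :
    Gmat (pext B) (p.map Sum.inl) = Matrix.fromBlocks (Gmat B p) 0 0 1 := by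
  obtain ⟨d, hd, h⟩ := hB
  have hsk : ∀ i j, d i * B i j = -(d j * B j i) := by
    intro i j
    have h2 := congrFun (congrFun h j) i
    simpa [Matrix.transpose_apply, Matrix.neg_apply, Matrix.diagonal_mul] using h2
  obtain ⟨-, -, -, -, -, -, g1, g2, g3, g4⟩ := pext_master B d hd hsk p
  ext i j
  cases i with
  | inl i =>
    cases j with
    | inl j => simpa [Gmat] using g1 i j
    | inr j => simpa [Gmat] using g2 i j
  | inr i =>
    cases j with
    | inl j => simpa [Gmat] using g3 i j
    | inr j => simpa [Gmat, Matrix.one_apply] using g4 i j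
end

section
/- Let B be a skew-symmetrizable n×n integer matrix and let t be reached from t_0 by a path with all directions in {1,…,n}. Then the 2n×2n F-matrix of the principal extension satisfies F^{B̄;t_0}_t = [[F^{B;t_0}_t, O], [O, O]]. -/
open Matrix

section InvAux

open Sum

variable {n : ℕ}

/-- The block invariant relating the seed of `B` to the seed of `pext B`. -/
structure PInv (s : SeedData (Fin n) ℤ) (t : SeedData (Fin n ⊕ Fin n) ℤ) : Prop where
  hB : ∀ i j, t.B (inl i) (inl j) = s.B i j
  hC1 : ∀ i j, t.C (inl i) (inl j) = s.C i j
  hC2 : ∀ i j, t.C (inr i) (inl j) = 0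
  hC3 : ∀ i j, t.C (inr i) (inr j) = if i = j then 1 else 0
  hF1 : ∀ i j, t.F (inl i) (inl j) = s.F i j
  hF2 : ∀ i j, t.F (inl i) (inr j) = 0
  hF3 : ∀ (i : Fin n) (b : Fin n ⊕ Fin n), t.F (inr i) b = 0

lemma pinv_step (B0 : Matrix (Fin n) (Fin n) ℤ) (s : SeedData (Fin n) ℤ)
    (t : SeedData (Fin n ⊕ Fin n) ℤ) (h : PInv s t) (l : Fin n) :
    PInv (seedStep B0 s l) (seedStep (pext B0) t (inl l)) := by
  obtain ⟨hB, hC1, hC2, hC3, hF1, hF2, hF3⟩ := h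
  have hJ : ∀ (a b : Fin n ⊕ Fin n),
      (Jmat (inl l) : Matrix (Fin n ⊕ Fin n) (Fin n ⊕ Fin n) ℤ) a b
        = if a = b then (if a = inl l then -1 else 1) else 0 := by
    intro a b
    simp [Jmat, Matrix.diagonal_apply]
  constructor
  · -- B
    intro i j
    simp only [seedStep, mutate, hB]
    by_cases hij : i = l ∨ j = l
    · rcases hij with h1 | h1 <;> simp [h1]
    · push_neg at hij
      simp [hij.1, hij.2, hB]
  · -- C top-left
    intro i j
    simp only [seedStep, Matrix.add_apply, Matrix.mul_apply, Fintype.sum_sum_type,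
      hJ, rowSel, colSel, matPos, Matrix.neg_apply, hC1, hC2, hC3, hB]
    simp [Finset.sum_ite_eq', Jmat, Matrix.diagonal_apply]
  · -- C bottom-left
    intro i j
    simp only [seedStep, Matrix.add_apply, Matrix.mul_apply, Fintype.sum_sum_type,
      hJ, rowSel, colSel, matPos, Matrix.neg_apply, hC1, hC2, hC3, hB]
    simp
  · -- C bottom-right
    intro i j
    simp only [seedStep, Matrix.add_apply, Matrix.mul_apply, Fintype.sum_sum_type,
      hJ, rowSel, colSel, matPos, Matrix.neg_apply, hC1, hC2, hC3, hB]
    simp [Finset.sum_ite_eq']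
  · -- F top-left
    intro i j
    simp only [seedStep, Matrix.add_apply, Matrix.mul_apply, Fintype.sum_sum_type,
      hJ, rowSel, colSel, matPos, emax, Matrix.neg_apply,
      hC1, hC2, hC3, hB, hF1, hF2, hF3]
    by_cases hj : j = l
    · simp [hj, Finset.sum_ite_eq', Jmat, Matrix.diagonal_apply]
    · simp [hj, Finset.sum_ite_eq', Jmat, Matrix.diagonal_apply]
  · -- F top-right
    intro i j
    simp only [seedStep, Matrix.add_apply, Matrix.mul_apply, Fintype.sum_sum_type,
      hJ, rowSel, colSel, matPos, emax, Matrix.neg_apply,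
      hC1, hC2, hC3, hB, hF1, hF2, hF3]
    simp
  · -- F bottom
    intro i b
    simp only [seedStep, Matrix.add_apply, Matrix.mul_apply, Fintype.sum_sum_type,
      hJ, rowSel, colSel, matPos, emax, Matrix.neg_apply,
      hC1, hC2, hC3, hB, hF1, hF2, hF3]
    by_cases hb : b = inl l <;> simp [hb, hC2]

lemma pinv_fold (B0 : Matrix (Fin n) (Fin n) ℤ) (p : List (Fin n)) :
    ∀ (s : SeedData (Fin n) ℤ) (t : SeedData (Fin n ⊕ Fin n) ℤ), PInv s t →
      PInv (p.foldl (seedStep B0) s) ((p.map inl).foldl (seedStep (pext B0)) t) := by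
  induction p with
  | nil => intro s t h; simpa using h
  | cons l p ih =>
      intro s t h
      simpa using ih _ _ (pinv_step B0 s t h l)

end InvAux

/-- the `F`-matrix of the principal extension is concentrated in the
upper-left block. -/
theorem pext_Fmat_block {n : ℕ}
    (B : Matrix (Fin n) (Fin n) ℤ) (hB : IsSkewSymmetrizable B) (p : List (Fin n)) :
    Fmat (pext B) (p.map Sum.inl) = Matrix.fromBlocks (Fmat B p) 0 0 0 := by
  have h0 : PInv (⟨B, 1, 1, 0⟩ : SeedData (Fin n) ℤ)
      (⟨pext B, 1, 1, 0⟩ : SeedData (Fin n ⊕ Fin n) ℤ) := by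
    constructor <;> intro i j <;>
      simp [pext, Matrix.fromBlocks, Matrix.one_apply, Sum.inl.injEq, Sum.inr.injEq]
  have h := pinv_fold B p _ _ h0
  ext a b
  match a, b with
  | Sum.inl i, Sum.inl j =>
      simpa [Fmat, seedOf, Matrix.fromBlocks] using h.hF1 i j
  | Sum.inl i, Sum.inr j =>
      simpa [Fmat, seedOf, Matrix.fromBlocks] using h.hF2 i j
  | Sum.inr i, Sum.inl j =>
      simpa [Fmat, seedOf, Matrix.fromBlocks] using h.hF3 i (Sum.inl j)
  | Sum.inr i, Sum.inr j =>
      simpa [Fmat, seedOf, Matrix.fromBlocks] using h.hF3 i (Sum.inr j)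
end

section
/- Let B be a skew-symmetrizable n×n integer matrix and let t be reached from t_0 by a path with all directions in {1,…,n}. Then the 2n×2n H-matrix of the principal extension satisfies H^{B̄;t_0}_t = [[H^{B;t_0}_t, O], [O, O]]. -/
open Matrix

section Aux
open MvPolynomial

lemma embK_algebraMap {n : ℕ} (q : MvPolynomial (Fin n) ℤ) :
    embK n (algebraMap (MvPolynomial (Fin n) ℤ) (FField (Fin n)) q)
      = algebraMap (MvPolynomial (Fin n ⊕ Fin n) ℤ) (FField (Fin n ⊕ Fin n))
          (MvPolynomial.rename Sum.inl q) := by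
  unfold embK
  erw [IsFractionRing.lift_algebraMap]
  rfl

lemma embK_yvar {n : ℕ} (i : Fin n) : embK n (yvar i) = yvar (Sum.inl i) := by
  rw [yvar, embK_algebraMap, MvPolynomial.rename_X]; rfl

lemma polyOf_algebraMap {ι : Type} (q : MvPolynomial ι ℤ) :
    polyOf (algebraMap (MvPolynomial ι ℤ) (FField ι) q) = q := by
  classical
  have h : ∃ r : MvPolynomial ι ℤ,
      algebraMap (MvPolynomial ι ℤ) (FField ι) r = algebraMap (MvPolynomial ι ℤ) (FField ι) q :=
    ⟨q, rfl⟩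
  rw [polyOf, dif_pos h]
  exact IsFractionRing.injective (MvPolynomial ι ℤ) (FField ι) h.choose_spec

lemma polyOf_not {ι : Type} {x : FField ι}
    (h : ¬ ∃ q : MvPolynomial ι ℤ, algebraMap (MvPolynomial ι ℤ) (FField ι) q = x) :
    polyOf x = 0 := by
  rw [polyOf, dif_neg h]

lemma embK_exists {n : ℕ} {x : FField (Fin n)}
    (h : ∃ q : MvPolynomial (Fin n ⊕ Fin n) ℤ,
      algebraMap (MvPolynomial (Fin n ⊕ Fin n) ℤ) (FField (Fin n ⊕ Fin n)) q = embK n x) :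
    ∃ q : MvPolynomial (Fin n) ℤ, algebraMap (MvPolynomial (Fin n) ℤ) (FField (Fin n)) q = x := by
  obtain ⟨q', hq'⟩ := h
  obtain ⟨a, b, hbmem, hab⟩ := IsFractionRing.div_surjective (A := MvPolynomial (Fin n) ℤ) x
  have hb : b ≠ 0 := nonZeroDivisors.ne_zero hbmem
  have hbK : algebraMap (MvPolynomial (Fin n) ℤ) (FField (Fin n)) b ≠ 0 := fun h0 =>
    hb (IsFractionRing.to_map_eq_zero_iff.1 h0)
  have hrb : (MvPolynomial.rename (Sum.inl : Fin n → Fin n ⊕ Fin n)) b ≠ 0 := by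
    intro h0
    exact hb (by simpa using congrArg (MvPolynomial.killCompl Sum.inl_injective) h0)
  have hrbK : algebraMap (MvPolynomial (Fin n ⊕ Fin n) ℤ) (FField (Fin n ⊕ Fin n))
      (MvPolynomial.rename Sum.inl b) ≠ 0 := fun h0 =>
    hrb (IsFractionRing.to_map_eq_zero_iff.1 h0)
  have h1 : embK n x = algebraMap _ _ (MvPolynomial.rename (Sum.inl : Fin n → Fin n ⊕ Fin n) a)
      / algebraMap _ _ (MvPolynomial.rename (Sum.inl : Fin n → Fin n ⊕ Fin n) b) := by
    rw [← hab, map_div₀, embK_algebraMap, embK_algebraMap]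
  have h2 : algebraMap (MvPolynomial (Fin n ⊕ Fin n) ℤ) (FField (Fin n ⊕ Fin n))
      (q' * MvPolynomial.rename Sum.inl b)
      = algebraMap _ _ (MvPolynomial.rename (Sum.inl : Fin n → Fin n ⊕ Fin n) a) := by
    rw [_root_.map_mul, hq', h1, div_mul_cancel₀ _ hrbK]
  have h3 : q' * MvPolynomial.rename Sum.inl b
      = MvPolynomial.rename (Sum.inl : Fin n → Fin n ⊕ Fin n) a :=
    IsFractionRing.injective _ _ h2
  refine ⟨MvPolynomial.killCompl Sum.inl_injective q', ?_⟩
  have h4 : (MvPolynomial.killCompl (R := ℤ) Sum.inl_injective q') * b = a := by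
    have := congrArg (MvPolynomial.killCompl (R := ℤ) Sum.inl_injective) h3
    simpa [_root_.map_mul, MvPolynomial.killCompl_rename_app] using this
  rw [← hab, ← h4, _root_.map_mul, mul_div_assoc, div_self hbK, mul_one]

lemma polyOf_embK {n : ℕ} (x : FField (Fin n)) :
    polyOf (embK n x) = MvPolynomial.rename Sum.inl (polyOf x) := by
  by_cases h : ∃ q : MvPolynomial (Fin n) ℤ, algebraMap (MvPolynomial (Fin n) ℤ) (FField (Fin n)) q = x
  · obtain ⟨q, rfl⟩ := h
    rw [embK_algebraMap, polyOf_algebraMap, polyOf_algebraMap]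
  · rw [polyOf_not h, polyOf_not (fun h' => h (embK_exists h')), map_zero]

end Aux

section Rel

variable {n : ℕ}

/-- The relation between an original seed triple and its principal-extension counterpart. -/
def pRel (s : Matrix (Fin n) (Fin n) ℤ × Matrix (Fin n) (Fin n) ℤ × (Fin n → FField (Fin n)))
    (t : Matrix (Fin n ⊕ Fin n) (Fin n ⊕ Fin n) ℤ × Matrix (Fin n ⊕ Fin n) (Fin n ⊕ Fin n) ℤ ×
      (Fin n ⊕ Fin n → FField (Fin n ⊕ Fin n))) : Prop :=
  (∀ i j, t.1 (Sum.inl i) (Sum.inl j) = s.1 i j) ∧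
  (∀ i j, t.2.1 (Sum.inl i) (Sum.inl j) = s.2.1 i j) ∧
  (∀ i j, t.2.1 (Sum.inr i) (Sum.inl j) = 0) ∧
  (∀ j, t.2.2 (Sum.inl j) = embK n (s.2.2 j)) ∧
  (∀ j, t.2.2 (Sum.inr j) = 1)

lemma pRel_step {s t} (h : pRel (n := n) s t) (ℓ : Fin n) :
    pRel (fpolyStep s ℓ) (fpolyStep t (Sum.inl ℓ)) := by
  obtain ⟨h1, h2, h3, h4, h5⟩ := h
  refine ⟨?_, ?_, ?_, ?_, ?_⟩
  · intro i j
    simp only [fpolyStep, mutate, Sum.inl.injEq, h1]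
  · intro i j
    simp only [fpolyStep, Matrix.add_apply, Matrix.mul_apply, Fintype.sum_sum_type,
      Jmat, rowSel, colSel, matPos, Matrix.diagonal_apply, Matrix.neg_apply,
      Sum.inl.injEq, reduceCtorEq, if_false, mul_zero, zero_mul, Finset.sum_const_zero,
      add_zero, h1, h2, h3]
  · intro i j
    simp only [fpolyStep, Matrix.add_apply, Matrix.mul_apply, Fintype.sum_sum_type,
      Jmat, rowSel, colSel, matPos, Matrix.diagonal_apply, Matrix.neg_apply,
      Sum.inl.injEq, reduceCtorEq, if_false, mul_zero, zero_mul, Finset.sum_const_zero,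
      add_zero, h1, h2, h3]
    simp
  · intro j
    by_cases hj : j = ℓ
    · subst hj
      simp only [fpolyStep]
      rw [if_pos trivial, if_pos trivial, _root_.map_mul, map_inv₀, map_add, _root_.map_mul,
        _root_.map_mul, map_prod, map_prod, map_prod, map_prod, h4]
      simp only [map_pow]
      have e1 : (∏ i : Fin n ⊕ Fin n, yvar i ^ (t.2.1 i (Sum.inl j) ⊔ 0).toNat)
          = ∏ i : Fin n, embK n (yvar i) ^ (s.2.1 i j ⊔ 0).toNat := by
        rw [Fintype.prod_sum_type]
        have hz : ∀ i : Fin n, (t.2.1 (Sum.inr i) (Sum.inl j) ⊔ 0).toNat = 0 := by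
          intro i; rw [h3]; rfl
        simp only [h2, hz, pow_zero, Finset.prod_const_one, mul_one, embK_yvar]
      have e2 : (∏ i : Fin n ⊕ Fin n, yvar i ^ (-t.2.1 i (Sum.inl j) ⊔ 0).toNat)
          = ∏ i : Fin n, embK n (yvar i) ^ (-s.2.1 i j ⊔ 0).toNat := by
        rw [Fintype.prod_sum_type]
        have hz : ∀ i : Fin n, (-t.2.1 (Sum.inr i) (Sum.inl j) ⊔ 0).toNat = 0 := by
          intro i; rw [h3]; rfl
        simp only [h2, hz, pow_zero, Finset.prod_const_one, mul_one, embK_yvar]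
      have e3 : (∏ i : Fin n ⊕ Fin n, t.2.2 i ^ (t.1 i (Sum.inl j) ⊔ 0).toNat)
          = ∏ i : Fin n, embK n (s.2.2 i) ^ (s.1 i j ⊔ 0).toNat := by
        rw [Fintype.prod_sum_type]
        simp only [h5, one_pow, Finset.prod_const_one, mul_one, h4, h1]
      have e4 : (∏ i : Fin n ⊕ Fin n, t.2.2 i ^ (-t.1 i (Sum.inl j) ⊔ 0).toNat)
          = ∏ i : Fin n, embK n (s.2.2 i) ^ (-s.1 i j ⊔ 0).toNat := by
        rw [Fintype.prod_sum_type]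
        simp only [h5, one_pow, Finset.prod_const_one, mul_one, h4, h1]
      rw [e1, e2, e3, e4]
    · have : (Sum.inl j : Fin n ⊕ Fin n) ≠ Sum.inl ℓ := by simpa using hj
      simp only [fpolyStep, if_neg this, if_neg hj, h4]
  · intro j
    simp only [fpolyStep, reduceCtorEq, if_false, h5]

lemma pRel_foldl (p : List (Fin n)) {s t} (h : pRel (n := n) s t) :
    pRel (p.foldl fpolyStep s) ((p.map Sum.inl).foldl fpolyStep t) := by
  induction p generalizing s t with
  | nil => exact h
  | cons a q ih => exact ih (pRel_step h a)

lemma pRel_init (B : Matrix (Fin n) (Fin n) ℤ) :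
    pRel (⟨B, 1, fun _ => 1⟩ : _ × _ × _) (⟨pext B, 1, fun _ => 1⟩ : _ × _ × _) := by
  refine ⟨?_, ?_, ?_, ?_, ?_⟩
  · intro i j; simp [pext]
  · intro i j; simp [Matrix.one_apply, Sum.inl.injEq]
  · intro i j; simp [Matrix.one_apply]
  · intro j; simp
  · intro j; rfl

lemma Fpoly_pext_inl (B : Matrix (Fin n) (Fin n) ℤ) (p : List (Fin n)) (j : Fin n) :
    Fpoly (pext B) (p.map Sum.inl) (Sum.inl j) = embK n (Fpoly B p j) :=
  (pRel_foldl p (pRel_init B)).2.2.2.1 j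

lemma Fpoly_pext_inr (B : Matrix (Fin n) (Fin n) ℤ) (p : List (Fin n)) (j : Fin n) :
    Fpoly (pext B) (p.map Sum.inl) (Sum.inr j) = 1 :=
  (pRel_foldl p (pRel_init B)).2.2.2.2 j

end Rel

section Main

lemma Hmat_entry_of_F_one {ι : Type} [Fintype ι] [DecidableEq ι]
    (B : Matrix ι ι ℤ) (p : List ι) (j : ι) (h : Fpoly B p j = 1) (i : ι) :
    Hmat B p i j = 0 := by
  classical
  have h1 : polyOf (Fpoly B p j) = 1 := by
    rw [h, ← map_one (algebraMap (MvPolynomial ι ℤ) (FField ι)), polyOf_algebraMap]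
  have hs : (1 : MvPolynomial ι ℤ).support = {0} := by
    rw [← MvPolynomial.C_1, MvPolynomial.C_apply, MvPolynomial.support_monomial,
      if_neg one_ne_zero]
  simp only [Hmat, h1, hs]
  rw [dif_pos (Finset.singleton_nonempty 0)]
  simp

theorem pext_Hmat_block' {n : ℕ}
    (B : Matrix (Fin n) (Fin n) ℤ) (hB : IsSkewSymmetrizable B) (p : List (Fin n)) :
    Hmat (pext B) (p.map Sum.inl) = Matrix.fromBlocks (Hmat B p) 0 0 0 := by
  classical
  ext i j
  cases j with
  | inr j0 =>
    have hj : Hmat (pext B) (p.map Sum.inl) i (Sum.inr j0) = 0 :=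
      Hmat_entry_of_F_one _ _ _ (Fpoly_pext_inr B p j0) i
    cases i with
    | inl i0 => simpa using hj
    | inr i0 => simpa using hj
  | inl j0 =>
    have hpo : polyOf (Fpoly (pext B) (p.map Sum.inl) (Sum.inl j0))
        = MvPolynomial.rename Sum.inl (polyOf (Fpoly B p j0)) := by
      rw [Fpoly_pext_inl, polyOf_embK]
    set q := polyOf (Fpoly B p j0) with hq
    have hsup : (MvPolynomial.rename (Sum.inl : Fin n → Fin n ⊕ Fin n) q).support
        = q.support.image (Finsupp.mapDomain Sum.inl) :=
      MvPolynomial.support_rename_of_injective Sum.inl_injective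
    have hmap0 : ∀ (a : Fin n →₀ ℕ) (l : Fin n),
        Finsupp.mapDomain (Sum.inl : Fin n → Fin n ⊕ Fin n) a (Sum.inr l) = 0 := by
      intro a l
      exact Finsupp.mapDomain_notin_range _ _ (by simp)
    cases i with
    | inl i0 =>
      show Hmat (pext B) (p.map Sum.inl) (Sum.inl i0) (Sum.inl j0) = Hmat B p i0 j0
      simp only [Hmat, hpo, hsup, ← hq]
      by_cases hne : q.support.Nonempty
      · rw [dif_pos (hne.image _), dif_pos hne, Finset.inf'_image]
        refine Finset.inf'_congr _ rfl ?_
        intro a ha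
        simp only [Function.comp_apply]
        rw [Finsupp.mapDomain_apply Sum.inl_injective]
        congr 1
        rw [Finset.sum_erase_eq_sub (Finset.mem_univ _),
          Finset.sum_erase_eq_sub (Finset.mem_univ _), Fintype.sum_sum_type]
        have hinr : ∀ l : Fin n,
            max (-(pext B (Sum.inl i0) (Sum.inr l))) 0 *
              ((Finsupp.mapDomain (Sum.inl : Fin n → Fin n ⊕ Fin n) a (Sum.inr l) : ℕ) : ℤ) = 0 := by
          intro l
          rw [hmap0]
          simp
        simp only [hinr, Finset.sum_const_zero, add_zero]
        have hinl : ∀ l : Fin n,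
            max (-(pext B (Sum.inl i0) (Sum.inl l))) 0 *
              ((Finsupp.mapDomain (Sum.inl : Fin n → Fin n ⊕ Fin n) a (Sum.inl l) : ℕ) : ℤ)
            = max (-(B i0 l)) 0 * (a l : ℤ) := by
          intro l
          rw [Finsupp.mapDomain_apply Sum.inl_injective]
          simp [pext]
        simp only [hinl]
      · rw [dif_neg (fun h => hne h.of_image), dif_neg hne]
    | inr i0 =>
      show Hmat (pext B) (p.map Sum.inl) (Sum.inr i0) (Sum.inl j0) = 0
      simp only [Hmat, hpo, hsup, ← hq]
      by_cases hne : q.support.Nonempty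
      · rw [dif_pos (hne.image _), Finset.inf'_image]
        have hzero : ∀ a ∈ q.support,
            (fun b : (Fin n ⊕ Fin n) →₀ ℕ =>
              -(b (Sum.inr i0) : ℤ) + ∑ l ∈ Finset.univ.erase (Sum.inr i0),
                max (-(pext B (Sum.inr i0) l)) 0 * (b l : ℤ))
              (Finsupp.mapDomain Sum.inl a) = 0 := by
          intro a ha
          simp only []
          rw [hmap0]
          have : ∀ l ∈ Finset.univ.erase (Sum.inr i0 : Fin n ⊕ Fin n),
              max (-(pext B (Sum.inr i0) l)) 0 *
                ((Finsupp.mapDomain (Sum.inl : Fin n → Fin n ⊕ Fin n) a l : ℕ) : ℤ) = 0 := by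
            intro l _
            cases l with
            | inl l0 =>
              have : max (-(pext B (Sum.inr i0) (Sum.inl l0))) 0 = 0 := by
                simp only [pext, Matrix.fromBlocks_apply₂₁, Matrix.one_apply]
                split_ifs <;> simp
              rw [this, zero_mul]
            | inr l0 =>
              rw [hmap0]
              simp
          rw [Finset.sum_eq_zero this]
          simp
        exact Eq.trans (Finset.inf'_congr _ rfl fun a ha => hzero a ha)
          (Finset.inf'_const _ (0 : ℤ))
      · rw [dif_neg (fun h => hne h.of_image)]

end Main

/-- the `H`-matrix of the principal extension is concentrated in the
upper-left block. -/
theorem pext_Hmat_block {n : ℕ}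
    (B : Matrix (Fin n) (Fin n) ℤ) (hB : IsSkewSymmetrizable B) (p : List (Fin n)) :
    Hmat (pext B) (p.map Sum.inl) = Matrix.fromBlocks (Hmat B p) 0 0 0 := by
  exact pext_Hmat_block' B hB p
end
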